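/- (Noncommutative Lewis-Carroll-like identity) Let R be a ring with an anti-automorphism τ ↦ τ̄ such that τ·τ̄ = τ̄·τ for every τ ∈ R, and such that every element τ with τ̄ = τ belongs to the centre of R. Let (q₁,…,qₙ) be a quasi-palindromic sequence in R of length n ≥ 2, i.e. q_i = conjugate(q_{n+1−i}) for 1 ≤ i ≤ n. Then [q₁,…,qₙ]·[q₂,…,q_{n−1}] = [q₂,…,qₙ]·[q₁,…,q_{n−1}] + (−1)ⁿ = [q₁,…,q_{n−1}]·[q₂,…,qₙ] + (−1)ⁿ. -/

import Mathlib

/-- Auxiliary function: the continuant computed on the *reversed* sequence,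
implementing the recurrence `[q₁,…,qₙ] = [q₁,…,q_{n−1}]·qₙ + [q₁,…,q_{n−2}]`
together with `[] = 1` and `[q₁] = q₁`. -/
def contAux {R : Type*} [Ring R] : List R → R
  | [] => 1
  | [a] => a
  | a :: b :: l => contAux (b :: l) * a + contAux l

/-- The continuant `[q₁,…,qₙ]` of the finite sequence `q₁,…,qₙ`. -/
def continuant {R : Type*} [Ring R] (l : List R) : R :=
  contAux l.reverse

namespace NCC
variable {R : Type*} [Ring R]

lemma cont_concat (m : List R) (y x : R) :
    continuant (m ++ [y, x]) = continuant (m ++ [y]) * x + continuant m := by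
  simp only [continuant, List.reverse_append]
  rfl

lemma cont_append_singleton (m : List R) (x : R) (hm : m ≠ []) :
    continuant (m ++ [x]) = continuant m * x + continuant m.dropLast := by
  induction m using List.reverseRecOn with
  | nil => simp at hm
  | append_singleton m y _ =>
    simp only [List.append_assoc, List.cons_append, List.nil_append]
    rw [cont_concat, List.dropLast_concat]

lemma cont_cons_cons_aux : ∀ (N : ℕ) (l : List R), l.length ≤ N → ∀ a b : R,
    continuant (a :: b :: l) = a * continuant (b :: l) + continuant l := by
  intro N
  induction N with
  | zero =>
    intro l hl a b
    rw [List.length_eq_zero_iff.mp (Nat.le_zero.mp hl)]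
    show continuant [a, b] = _
    simp [continuant, contAux]
  | succ N ih =>
    intro l hl a b
    rcases hrev : l.reverse with _ | ⟨x, t⟩
    · rw [← List.reverse_reverse l, hrev]
      simp [continuant, contAux]
    rcases t with _ | ⟨y, s⟩
    · rw [← List.reverse_reverse l, hrev]
      simp only [List.reverse_cons, List.reverse_nil, List.nil_append]
      show continuant [a, b, x] = a * continuant [b, x] + continuant [x]
      simp only [continuant, List.reverse_cons, List.reverse_nil, List.nil_append,
        List.cons_append, contAux]
      noncomm_ring
    · have hl2 : l = s.reverse ++ [y] ++ [x] := by
        rw [← List.reverse_reverse l, hrev]; simp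
      have hlen : l.length = s.length + 2 := by rw [hl2]; simp
      rw [hl2]
      have h1 : s.reverse.length ≤ N := by simp; omega
      have h2 : (s.reverse ++ [y]).length ≤ N := by simp; omega
      have e1 : (a :: b :: (s.reverse ++ [y] ++ [x])) = (a :: b :: (s.reverse ++ [y])) ++ [x] := by simp
      have e2 : (b :: (s.reverse ++ [y] ++ [x])) = (b :: (s.reverse ++ [y])) ++ [x] := by simp
      have e3 : s.reverse ++ [y] ++ [x] = (s.reverse ++ [y]) ++ [x] := rfl
      have d1 : (a :: b :: (s.reverse ++ [y])).dropLast = a :: b :: s.reverse := by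
        rw [show a :: b :: (s.reverse ++ [y]) = (a :: b :: s.reverse) ++ [y] from rfl, List.dropLast_concat]
      have d2 : (b :: (s.reverse ++ [y])).dropLast = b :: s.reverse := by
        rw [show b :: (s.reverse ++ [y]) = (b :: s.reverse) ++ [y] from rfl, List.dropLast_concat]
      rw [e1, e2, e3, cont_append_singleton (a :: b :: (s.reverse ++ [y])) x (by simp),
        cont_append_singleton (b :: (s.reverse ++ [y])) x (by simp),
        cont_append_singleton (s.reverse ++ [y]) x (by simp),
        d1, d2, List.dropLast_concat,
        ih (s.reverse ++ [y]) h2 a b, ih s.reverse h1 a b]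
      noncomm_ring

lemma cont_cons_cons (l : List R) (a b : R) :
    continuant (a :: b :: l) = a * continuant (b :: l) + continuant l :=
  cont_cons_cons_aux l.length l le_rfl a b

variable (σ : R → R)

lemma sigma_one (hinv : ∀ a, σ (σ a) = a) (hmul : ∀ a b, σ (a * b) = σ b * σ a) :
    σ 1 = 1 := by
  have h := hmul 1 (σ 1)
  rw [one_mul, hinv, one_mul] at h
  exact h.symm

lemma sigma_cont_aux (hinv : ∀ a, σ (σ a) = a) (hadd : ∀ a b, σ (a + b) = σ a + σ b)
    (hmul : ∀ a b, σ (a * b) = σ b * σ a) :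
    ∀ (N : ℕ) (l : List R), l.length ≤ N →
      σ (continuant l) = continuant ((l.map σ).reverse) := by
  intro N
  induction N with
  | zero =>
    intro l hl
    rw [List.length_eq_zero_iff.mp (Nat.le_zero.mp hl)]
    simpa [continuant, contAux] using sigma_one σ hinv hmul
  | succ N ih =>
    intro l hl
    rcases l with _ | ⟨a, t⟩
    · simpa [continuant, contAux] using sigma_one σ hinv hmul
    rcases t with _ | ⟨b, s⟩
    · simp [continuant, contAux]
    · have h1 : s.length ≤ N := by simp at hl; omega
      have h2 : (b :: s).length ≤ N := by simp at hl ⊢; omega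
      rw [cont_cons_cons, hadd, hmul, ih s h1, ih (b :: s) h2]
      have e1 : ((a :: b :: s).map σ).reverse = ((s.map σ).reverse) ++ [σ b, σ a] := by simp
      have e2 : ((b :: s).map σ).reverse = ((s.map σ).reverse) ++ [σ b] := by simp
      rw [e1, e2, cont_concat]

lemma sigma_cont (hinv : ∀ a, σ (σ a) = a) (hadd : ∀ a b, σ (a + b) = σ a + σ b)
    (hmul : ∀ a b, σ (a * b) = σ b * σ a) (l : List R) :
    σ (continuant l) = continuant ((l.map σ).reverse) :=
  sigma_cont_aux σ hinv hadd hmul l.length l le_rfl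

/-- For a quasi-palindromic list, the continuant is `σ`-fixed. -/
lemma sigma_cont_fixed (hinv : ∀ a, σ (σ a) = a) (hadd : ∀ a b, σ (a + b) = σ a + σ b)
    (hmul : ∀ a b, σ (a * b) = σ b * σ a) (l : List R) (hpal : l.map σ = l.reverse) :
    σ (continuant l) = continuant l := by
  rw [sigma_cont σ hinv hadd hmul, hpal, List.reverse_reverse]

/-- `σ` maps the dropLast-continuant to the tail-continuant of a quasi-palindromic list. -/
lemma sigma_cont_dropLast (hinv : ∀ a, σ (σ a) = a) (hadd : ∀ a b, σ (a + b) = σ a + σ b)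
    (hmul : ∀ a b, σ (a * b) = σ b * σ a) (l : List R) (hpal : l.map σ = l.reverse) :
    σ (continuant l.dropLast) = continuant l.tail := by
  rw [sigma_cont σ hinv hadd hmul]
  congr 1
  rw [List.map_dropLast, hpal]
  have := List.tail_reverse (l := l.reverse)
  rw [List.reverse_reverse] at this
  rw [← this]

lemma key_step (a sa A' B' C' D' ε : R)
    (hA' : ∀ x, A' * x = x * A') (hIH : A' * D' = C' * B' + ε) :
    (a * (A' * sa + B') + (C' * sa + D')) * A' = (a * A' + C') * (A' * sa + B') + ε := by
  have h4 : D' * A' = C' * B' + ε := by rw [← hA' D', hIH]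
  have expand1 : (a * (A' * sa + B') + (C' * sa + D')) * A'
      = a * (A' * (sa * A')) + a * (B' * A') + C' * (sa * A') + D' * A' := by noncomm_ring
  have expand2 : (a * A' + C') * (A' * sa + B') + ε
      = a * (A' * (A' * sa)) + a * (A' * B') + C' * (A' * sa) + (C' * B' + ε) := by noncomm_ring
  rw [expand1, expand2, ← hA' sa, ← hA' B', h4]

lemma key3 (a b c : R) (hb : ∀ x, b * x = x * b) :
    ((a * b + 1) * c + a) * b = (a * b + 1) * (b * c + 1) + (-1 : R) := by
  have h1 : c * b = b * c := (hb c).symm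
  calc ((a * b + 1) * c + a) * b = (a * b + 1) * (c * b) + a * b := by noncomm_ring
    _ = (a * b + 1) * (b * c) + a * b := by rw [h1]
    _ = (a * b + 1) * (b * c + 1) + (-1 : R) := by noncomm_ring

lemma bc_form (hinv : ∀ a, σ (σ a) = a) (hadd : ∀ a b, σ (a + b) = σ a + σ b)
    (hmul : ∀ a b, σ (a * b) = σ b * σ a) (hcomm : ∀ a, a * σ a = σ a * a)
    (hcentral : ∀ a, σ a = a → ∀ b, a * b = b * a) :
    ∀ (N : ℕ) (l : List R), l.length ≤ N → 2 ≤ l.length → l.map σ = l.reverse →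
      continuant l * continuant l.tail.dropLast
        = continuant l.dropLast * continuant l.tail + (-1) ^ l.length := by
  intro N
  induction N with
  | zero => intro l hl h2 _; omega
  | succ N ih =>
    intro l hl h2 hpal
    rcases l with _ | ⟨a, t⟩
    · simp at h2
    rcases t with _ | ⟨b, u⟩
    · simp at h2
    rcases u with _ | ⟨c, v⟩
    · -- length 2 case : l = [a, b]
      simp only [List.map_cons, List.map_nil, List.reverse_cons, List.reverse_nil,
        List.nil_append, List.cons_append, List.cons.injEq, and_true] at hpal
      obtain ⟨hab, hba⟩ := hpal
      show continuant [a, b] * continuant [] = continuant [a] * continuant [b] + (-1) ^ 2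
      simp [continuant, contAux]
    rcases v with _ | ⟨d, w⟩
    · -- length 3 case : l = [a, b, c]
      simp only [List.map_cons, List.map_nil, List.reverse_cons, List.reverse_nil,
        List.nil_append, List.cons_append, List.cons.injEq, and_true] at hpal
      obtain ⟨hac, hbb, hca⟩ := hpal
      show continuant [a, b, c] * continuant [b]
        = continuant [a, b] * continuant [b, c] + (-1) ^ 3
      have hb : ∀ x, b * x = x * b := hcentral b hbb
      have h3 : continuant [a, b, c] = (a * b + 1) * c + a := by
        simp [continuant, contAux]
      have h4 : continuant [a, b] = a * b + 1 := by simp [continuant, contAux]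
      have h5 : continuant [b, c] = b * c + 1 := by simp [continuant, contAux]
      have h6 : continuant [b] = b := rfl
      rw [h3, h4, h5, h6]
      have : ((-1 : R)) ^ 3 = -1 := by norm_num
      rw [this]
      exact key3 a b c hb
    · -- length ≥ 4
      rcases hrev : (c :: d :: w).reverse with _ | ⟨x, s⟩
      · have := congrArg List.length hrev; simp at this
      have hdecomp : c :: d :: w = s.reverse ++ [x] := by
        rw [← List.reverse_reverse (c :: d :: w), hrev]; simp
      rw [hdecomp] at hpal ⊢
      simp only [List.map_cons, List.map_append, List.map_nil, List.reverse_cons,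
        List.reverse_append, List.reverse_nil, List.nil_append, List.cons_append,
        List.append_assoc, List.singleton_append, List.cons.injEq] at hpal
      obtain ⟨hax, hrest⟩ := hpal
      rw [List.reverse_reverse] at hrest
      have hlen_s : s.length = w.length + 1 := by
        have h := congrArg List.length hrev
        simp at h
        omega
      have hsne : s.reverse ≠ [] := by
        apply List.length_pos_iff.mp
        simp [hlen_s]
      have e : (σ b :: List.map σ s.reverse) ++ [σ x] = (s ++ [b]) ++ [a] := by
        simpa [List.append_assoc] using hrest
      obtain ⟨hpref, hxa⟩ := List.append_inj' e (by simp)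
      have hpalm : List.map σ (b :: s.reverse) = (b :: s.reverse).reverse := by
        simpa [List.reverse_cons, List.reverse_reverse] using hpref
      have hl4 : w.length + 4 ≤ N + 1 := by simp at hl; omega
      have hmlen : (b :: s.reverse).length ≤ N := by simp [hlen_s]; omega
      have hswap : σ (continuant (b :: s.reverse).dropLast) = continuant (b :: s.reverse).tail :=
        sigma_cont_dropLast σ hinv hadd hmul _ hpalm
      simp only [List.tail_cons] at hswap
      have hfix : σ (continuant (b :: s.reverse)) = continuant (b :: s.reverse) :=
        sigma_cont_fixed σ hinv hadd hmul _ hpalm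
      have hA'c : ∀ y, continuant (b :: s.reverse) * y = y * continuant (b :: s.reverse) :=
        hcentral _ hfix
      have hBC : continuant ((b :: s.reverse).dropLast) * continuant s.reverse
          = continuant s.reverse * continuant ((b :: s.reverse).dropLast) := by
        have h := hcomm (continuant ((b :: s.reverse).dropLast))
        rw [hswap] at h
        exact h
      have hIH' : continuant (b :: s.reverse) * continuant s.reverse.dropLast
          = continuant s.reverse * continuant ((b :: s.reverse).dropLast)
            + (-1) ^ (s.length + 1) := by
        have h := ih (b :: s.reverse) hmlen (by simp [hlen_s]) hpalm
        simp only [List.tail_cons, List.length_cons, List.length_reverse] at h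
        rw [hBC] at h
        exact h
      have t1 : (a :: b :: (s.reverse ++ [x])).tail.dropLast = b :: s.reverse := by
        rw [List.tail_cons, show b :: (s.reverse ++ [x]) = (b :: s.reverse) ++ [x] from rfl,
          List.dropLast_concat]
      have t2 : (a :: b :: (s.reverse ++ [x])).dropLast = a :: b :: s.reverse := by
        rw [show a :: b :: (s.reverse ++ [x]) = (a :: b :: s.reverse) ++ [x] from rfl,
          List.dropLast_concat]
      have t3 : (a :: b :: (s.reverse ++ [x])).tail = b :: (s.reverse ++ [x]) := rfl
      have c1 : continuant (a :: b :: (s.reverse ++ [x]))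
          = a * (continuant (b :: s.reverse) * x + continuant ((b :: s.reverse).dropLast))
            + (continuant s.reverse * x + continuant s.reverse.dropLast) := by
        rw [cont_cons_cons]
        rw [show b :: (s.reverse ++ [x]) = (b :: s.reverse) ++ [x] from rfl,
          cont_append_singleton (b :: s.reverse) x (by simp),
          cont_append_singleton s.reverse x hsne]
      have c2 : continuant (b :: (s.reverse ++ [x]))
          = continuant (b :: s.reverse) * x + continuant ((b :: s.reverse).dropLast) := by
        rw [show b :: (s.reverse ++ [x]) = (b :: s.reverse) ++ [x] from rfl,
          cont_append_singleton (b :: s.reverse) x (by simp)]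
      have c3 : continuant (a :: b :: s.reverse)
          = a * continuant (b :: s.reverse) + continuant s.reverse := cont_cons_cons _ a b
      have hlen4 : (a :: b :: (s.reverse ++ [x])).length = s.length + 1 + 2 := by simp
      have hpow : ((-1 : R)) ^ (a :: b :: (s.reverse ++ [x])).length = (-1) ^ (s.length + 1) := by
        rw [hlen4, pow_add]
        norm_num
      rw [t1, t2, t3, c1, c2, c3, hpow]
      exact key_step a x (continuant (b :: s.reverse)) (continuant ((b :: s.reverse).dropLast))
        (continuant s.reverse) (continuant s.reverse.dropLast) ((-1) ^ (s.length + 1)) hA'c hIH'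

end NCC

/-- **Noncommutative Lewis-Carroll-like identity.** Let `σ` be an anti-automorphism of a
ring `R` such that `τ·στ = στ·τ` for all `τ` and every `σ`-fixed element is central.
For a quasi-palindromic sequence `(q₁,…,qₙ)` (i.e. `qᵢ = σ q_{n+1−i}`) of length `n ≥ 2`,
`[q₁,…,qₙ]·[q₂,…,q_{n−1}] = [q₂,…,qₙ]·[q₁,…,q_{n−1}] + (−1)ⁿ
  = [q₁,…,q_{n−1}]·[q₂,…,qₙ] + (−1)ⁿ`. -/
theorem continuant_quasi_palindromic {R : Type*} [Ring R] (σ : R → R)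
    (hinv : ∀ a, σ (σ a) = a)
    (hadd : ∀ a b, σ (a + b) = σ a + σ b)
    (hmul : ∀ a b, σ (a * b) = σ b * σ a)
    (hcomm : ∀ a, a * σ a = σ a * a)
    (hcentral : ∀ a, σ a = a → ∀ b, a * b = b * a)
    (n : ℕ) (hn : 2 ≤ n) (q : Fin n → R)
    (hqp : ∀ i : Fin n, q i = σ (q ⟨n - 1 - (i : ℕ), by have := i.isLt; omega⟩)) :
    continuant (List.ofFn q) * continuant (((List.ofFn q).tail).dropLast) =
        continuant ((List.ofFn q).tail) * continuant ((List.ofFn q).dropLast) + (-1) ^ n ∧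
      continuant (List.ofFn q) * continuant (((List.ofFn q).tail).dropLast) =
        continuant ((List.ofFn q).dropLast) * continuant ((List.ofFn q).tail) + (-1) ^ n := by
  have hlen : (List.ofFn q).length = n := by simp
  have hpal : List.map σ (List.ofFn q) = (List.ofFn q).reverse := by
    apply List.ext_getElem (by simp)
    intro i h1 h2
    rw [List.getElem_map, List.getElem_reverse]
    have hi : i < n := by simpa using h1
    rw [List.getElem_ofFn, List.getElem_ofFn]
    rw [hqp ⟨i, hi⟩, hinv]
    congr 1
    exact Fin.ext (by simp)
  have hbc := NCC.bc_form σ hinv hadd hmul hcomm hcentral (List.ofFn q).length (List.ofFn q)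
    le_rfl (by omega) hpal
  rw [hlen] at hbc
  have hswap : σ (continuant (List.ofFn q).dropLast) = continuant (List.ofFn q).tail :=
    NCC.sigma_cont_dropLast σ hinv hadd hmul _ hpal
  have hcb : continuant (List.ofFn q).dropLast * continuant (List.ofFn q).tail
      = continuant (List.ofFn q).tail * continuant (List.ofFn q).dropLast := by
    have h := hcomm (continuant (List.ofFn q).dropLast)
    rw [hswap] at h
    exact h
  exact ⟨by rw [hbc, hcb], hbc⟩
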